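/- Let k ≥ 1 and let G be a bipartite graph with bipartition (X, Y) such that β^k(G, X) ≥ 1. Then G contains k pairwise edge-disjoint matchings, each of which covers every vertex of X. -/

import Mathlib

open Finset
open scoped Classical

variable {V : Type*}

/-- The k-th neighborhood: vertices adjacent to at least `k` vertices of `S`. -/
noncomputable def kNbhd [Fintype V] (G : SimpleGraph V) (k : ℕ) (S : Finset V) : Finset V :=
  Finset.univ.filter fun v => k ≤ (S.filter fun u => G.Adj v u).card

/-- The k-th binding number. -/
noncomputable def bindingNum [Fintype V] (G : SimpleGraph V) (k : ℕ) : ℝ :=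
  if h : (Finset.univ.filter fun S : Finset V =>
      k ≤ S.card ∧ kNbhd G k S ≠ Finset.univ).Nonempty then
    (Finset.univ.filter fun S : Finset V =>
      k ≤ S.card ∧ kNbhd G k S ≠ Finset.univ).inf' h
      fun S => ((kNbhd G k S).card : ℝ) / (S.card : ℝ)
  else 0

/-- The weak bipartite k-th binding number, for a bipartite graph with part `X`. -/
noncomputable def bipBindingNum [Fintype V] (G : SimpleGraph V) (k : ℕ) (X : Finset V) : ℝ :=
  if h : (X.powerset.filter fun S : Finset V => k ≤ S.card).Nonempty then
    (X.powerset.filter fun S : Finset V => k ≤ S.card).inf' h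
      fun S => ((kNbhd G k S).card : ℝ) / (S.card : ℝ)
  else 0

/-- Double counting: summing usage over `Y` equals summing cardinalities. -/
lemma double_count (A Y : Finset V) (B : V → Finset V) (h : ∀ x ∈ A, B x ⊆ Y) :
    ∑ y ∈ Y, (A.filter (fun x => y ∈ B x)).card = ∑ x ∈ A, (B x).card := by
  simp_rw [Finset.card_filter]
  rw [Finset.sum_comm]
  refine Finset.sum_congr rfl (fun x hx => ?_)
  rw [← Finset.card_filter]
  congr 1
  ext y
  simp only [Finset.mem_filter]
  exact ⟨fun h' => h'.2, fun hy => ⟨h x hx hy, hy⟩⟩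

/-- Degree-constrained subgraph existence (generalized b-matching via Hall-type condition). -/
lemma bmatch (Y : Finset V) :
    ∀ n : ℕ, ∀ (X : Finset V) (N : V → Finset V) (d c : V → ℕ),
      (∀ x ∈ X, N x ⊆ Y) → (∑ x ∈ X, d x = n) →
      (∀ S ⊆ X, ∑ x ∈ S, d x ≤ ∑ y ∈ Y, min (c y) ((S.filter (fun x => y ∈ N x)).card)) →
      ∃ B : V → Finset V, (∀ x ∈ X, B x ⊆ N x) ∧ (∀ x ∈ X, (B x).card = d x) ∧
        ∀ y ∈ Y, (X.filter (fun x => y ∈ B x)).card ≤ c y := by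
  intro n
  induction n using Nat.strong_induction_on with
  | _ n IH =>
  intro X N d c hN hsum hcond
  rcases Nat.eq_zero_or_pos n with hn0 | hnpos
  · -- trivial case
    subst hn0
    refine ⟨fun _ => ∅, fun x _ => Finset.empty_subset _, fun x hx => ?_, fun y _ => ?_⟩
    · have := (Finset.sum_eq_zero_iff).mp hsum x hx
      simp [this]
    · simp
  -- pick a vertex with positive demand
  have hx0 : ∃ x0 ∈ X, 0 < d x0 := by
    by_contra h
    push_neg at h
    have : ∑ x ∈ X, d x = 0 := Finset.sum_eq_zero (fun x hx => Nat.le_zero.mp (h x hx))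
    omega
  obtain ⟨x0, hx0X, hdx0⟩ := hx0
  by_cases hP : ∃ S, S ⊆ X ∧ 0 < ∑ x ∈ S, d x ∧ ∑ x ∈ S, d x < n ∧
      ∑ y ∈ Y, min (c y) ((S.filter (fun x => y ∈ N x)).card) = ∑ x ∈ S, d x
  · -- Case A: a tight set exists
    obtain ⟨S₀, hS₀X, hpos, hlt, htight⟩ := hP
    obtain ⟨B₁, hB₁N, hB₁card, hB₁use⟩ := IH (∑ x ∈ S₀, d x) hlt S₀ N d c
      (fun x hx => hN x (hS₀X hx)) rfl (fun S hS => hcond S (hS.trans hS₀X))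
    set u : V → ℕ := fun y => (S₀.filter (fun x => y ∈ B₁ x)).card with hu
    have hBY₁ : ∀ x ∈ S₀, B₁ x ⊆ Y := fun x hx => (hB₁N x hx).trans (hN x (hS₀X hx))
    have hsum_u : ∑ y ∈ Y, u y = ∑ x ∈ S₀, d x := by
      rw [double_count S₀ Y B₁ hBY₁]
      exact Finset.sum_congr rfl (fun x hx => hB₁card x hx)
    have hle : ∀ y ∈ Y, u y ≤ min (c y) ((S₀.filter (fun x => y ∈ N x)).card) := by
      intro y hy
      refine le_min (hB₁use y hy) (Finset.card_le_card ?_)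
      intro x hx
      rw [Finset.mem_filter] at hx ⊢
      exact ⟨hx.1, hB₁N x hx.1 hx.2⟩
    have hueq : ∀ y ∈ Y, u y = min (c y) ((S₀.filter (fun x => y ∈ N x)).card) := by
      by_contra h
      push_neg at h
      obtain ⟨y0, hy0, hne⟩ := h
      have : ∑ y ∈ Y, u y < ∑ y ∈ Y, min (c y) ((S₀.filter (fun x => y ∈ N x)).card) :=
        Finset.sum_lt_sum hle ⟨y0, hy0, lt_of_le_of_ne (hle y0 hy0) hne⟩
      omega
    -- second sub-instance on X minus S₀
    have hsplit : ∑ x ∈ X \ S₀, d x + ∑ x ∈ S₀, d x = n := by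
      rw [← hsum]; exact Finset.sum_sdiff hS₀X
    have hn₂lt : ∑ x ∈ X \ S₀, d x < n := by omega
    have hcond₂ : ∀ T ⊆ X \ S₀, ∑ x ∈ T, d x ≤
        ∑ y ∈ Y, min (c y - u y) ((T.filter (fun x => y ∈ N x)).card) := by
      intro T hT
      have hdisj : Disjoint T S₀ := (Finset.subset_sdiff.mp hT).2
      have key : ∀ y ∈ Y, min (c y - u y) ((T.filter (fun x => y ∈ N x)).card) + u y
          = min (c y) (((T ∪ S₀).filter (fun x => y ∈ N x)).card) := by
        intro y hy
        have hcards : ((T ∪ S₀).filter (fun x => y ∈ N x)).card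
            = (T.filter (fun x => y ∈ N x)).card + (S₀.filter (fun x => y ∈ N x)).card := by
          rw [Finset.filter_union]
          exact Finset.card_union_of_disjoint (Finset.disjoint_filter_filter hdisj)
        rw [hueq y hy, hcards]
        omega
      have hsum2 : ∑ y ∈ Y, min (c y - u y) ((T.filter (fun x => y ∈ N x)).card) + ∑ y ∈ Y, u y
          = ∑ y ∈ Y, min (c y) (((T ∪ S₀).filter (fun x => y ∈ N x)).card) := by
        rw [← Finset.sum_add_distrib]
        exact Finset.sum_congr rfl key
      have hTS : T ∪ S₀ ⊆ X := Finset.union_subset (hT.trans Finset.sdiff_subset) hS₀X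
      have hcc := hcond (T ∪ S₀) hTS
      rw [Finset.sum_union hdisj] at hcc
      omega
    obtain ⟨B₂, hB₂N, hB₂card, hB₂use⟩ := IH (∑ x ∈ X \ S₀, d x) hn₂lt (X \ S₀) N d
      (fun y => c y - u y) (fun x hx => hN x (Finset.sdiff_subset hx)) rfl hcond₂
    refine ⟨fun x => if x ∈ S₀ then B₁ x else B₂ x, fun x hx => ?_, fun x hx => ?_, fun y hy => ?_⟩
    · by_cases h : x ∈ S₀ <;> simp only [h, if_true, if_false]
      · exact hB₁N x h
      · exact hB₂N x (Finset.mem_sdiff.mpr ⟨hx, h⟩)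
    · by_cases h : x ∈ S₀ <;> simp only [h, if_true, if_false]
      · exact hB₁card x h
      · exact hB₂card x (Finset.mem_sdiff.mpr ⟨hx, h⟩)
    · show (X.filter (fun x => y ∈ (if x ∈ S₀ then B₁ x else B₂ x))).card ≤ c y
      have hsub : X.filter (fun x => y ∈ (if x ∈ S₀ then B₁ x else B₂ x)) ⊆
          (S₀.filter (fun x => y ∈ B₁ x)) ∪ ((X \ S₀).filter (fun x => y ∈ B₂ x)) := by
        intro x hx
        rw [Finset.mem_filter] at hx
        by_cases h : x ∈ S₀
        · refine Finset.mem_union_left _ (Finset.mem_filter.mpr ⟨h, ?_⟩)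
          simpa [h] using hx.2
        · refine Finset.mem_union_right _ (Finset.mem_filter.mpr
            ⟨Finset.mem_sdiff.mpr ⟨hx.1, h⟩, ?_⟩)
          simpa [h] using hx.2
      have h1 := Finset.card_le_card hsub
      have h2 := Finset.card_union_le (S₀.filter (fun x => y ∈ B₁ x))
        ((X \ S₀).filter (fun x => y ∈ B₂ x))
      have h3 := hB₂use y hy
      have h4 : u y ≤ c y := le_trans (hle y hy) (min_le_left _ _)
      have h5 : (S₀.filter (fun x => y ∈ B₁ x)).card = u y := rfl
      omega
  · -- Case B: no tight set
    push_neg at hP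
    have hstrict : ∀ S ⊆ X, 0 < ∑ x ∈ S, d x → ∑ x ∈ S, d x < n →
        ∑ x ∈ S, d x + 1 ≤ ∑ y ∈ Y, min (c y) ((S.filter (fun x => y ∈ N x)).card) := by
      intro S hS h1 h2
      have ha := hcond S hS
      have hb := hP S hS h1 h2
      omega
    -- find y*
    have hx0cond := hcond {x0} (Finset.singleton_subset_iff.mpr hx0X)
    rw [Finset.sum_singleton] at hx0cond
    have hystar : ∃ y ∈ Y, 0 < min (c y) (({x0} : Finset V).filter (fun x => y ∈ N x)).card := by
      by_contra h
      push_neg at h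
      have : ∑ y ∈ Y, min (c y) (({x0} : Finset V).filter (fun x => y ∈ N x)).card = 0 :=
        Finset.sum_eq_zero (fun y hy => Nat.le_zero.mp (h y hy))
      omega
    obtain ⟨ys, hysY, hysmin⟩ := hystar
    have hcys : 0 < c ys := lt_of_lt_of_le hysmin (min_le_left _ _)
    have hysN : ys ∈ N x0 := by
      have hpos : 0 < (({x0} : Finset V).filter (fun x => ys ∈ N x)).card :=
        lt_of_lt_of_le hysmin (min_le_right _ _)
      obtain ⟨x, hx⟩ := Finset.card_pos.mp hpos
      rw [Finset.mem_filter, Finset.mem_singleton] at hx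
      rw [← hx.1]
      exact hx.2
    set N' := Function.update N x0 ((N x0).erase ys) with hN'def
    set d' := Function.update d x0 (d x0 - 1) with hd'def
    set c' := Function.update c ys (c ys - 1) with hc'def
    have hsum' : ∑ x ∈ X, d' x = n - 1 := by
      rw [hd'def, Finset.sum_update_of_mem hx0X]
      have : ∑ x ∈ X, d x = d x0 + ∑ x ∈ X \ {x0}, d x :=
        Finset.sum_eq_add_sum_sdiff_singleton_of_mem hx0X d
      omega
    have hN'sub : ∀ x ∈ X, N' x ⊆ Y := by
      intro x hx
      by_cases h : x = x0
      · subst h; rw [hN'def, Function.update_self]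
        exact (Finset.erase_subset _ _).trans (hN x hx)
      · rw [hN'def, Function.update_of_ne h]; exact hN x hx
    have hcond' : ∀ S ⊆ X, ∑ x ∈ S, d' x ≤
        ∑ y ∈ Y, min (c' y) ((S.filter (fun x => y ∈ N' x)).card) := by
      intro S hS
      have hterm : ∀ y ∈ Y, y ≠ ys → min (c' y) ((S.filter (fun x => y ∈ N' x)).card)
          = min (c y) ((S.filter (fun x => y ∈ N x)).card) := by
        intro y hy hne
        rw [hc'def, Function.update_of_ne hne]
        congr 2
        apply Finset.filter_congr
        intro x hx
        by_cases h : x = x0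
        · subst h
          rw [hN'def, Function.update_self]
          simp [Finset.mem_erase, hne]
        · rw [hN'def, Function.update_of_ne h]
      have hrest : ∑ y ∈ Y \ {ys}, min (c' y) ((S.filter (fun x => y ∈ N' x)).card)
          = ∑ y ∈ Y \ {ys}, min (c y) ((S.filter (fun x => y ∈ N x)).card) := by
        refine Finset.sum_congr rfl (fun y hy => ?_)
        rw [Finset.mem_sdiff, Finset.mem_singleton] at hy
        exact hterm y hy.1 hy.2
      have hc'ys : c' ys = c ys - 1 := by rw [hc'def, Function.update_self]
      have hsplit1 : ∑ y ∈ Y, min (c' y) ((S.filter (fun x => y ∈ N' x)).card)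
          = min (c' ys) ((S.filter (fun x => ys ∈ N' x)).card)
            + ∑ y ∈ Y \ {ys}, min (c' y) ((S.filter (fun x => y ∈ N' x)).card) :=
        Finset.sum_eq_add_sum_sdiff_singleton_of_mem hysY _
      have hsplit2 : ∑ y ∈ Y, min (c y) ((S.filter (fun x => y ∈ N x)).card)
          = min (c ys) ((S.filter (fun x => ys ∈ N x)).card)
            + ∑ y ∈ Y \ {ys}, min (c y) ((S.filter (fun x => y ∈ N x)).card) :=
        Finset.sum_eq_add_sum_sdiff_singleton_of_mem hysY _
      by_cases hx0S : x0 ∈ S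
      · have hd'S : ∑ x ∈ S, d' x + 1 = ∑ x ∈ S, d x := by
          rw [hd'def, Finset.sum_update_of_mem hx0S]
          have : ∑ x ∈ S, d x = d x0 + ∑ x ∈ S \ {x0}, d x :=
            Finset.sum_eq_add_sum_sdiff_singleton_of_mem hx0S d
          omega
        have hfe : S.filter (fun x => ys ∈ N' x) = (S.filter (fun x => ys ∈ N x)).erase x0 := by
          ext x
          rw [Finset.mem_erase, Finset.mem_filter, Finset.mem_filter]
          constructor
          · rintro ⟨hxS, hxN⟩
            by_cases h : x = x0
            · subst h
              rw [hN'def, Function.update_self] at hxN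
              exact absurd hxN (Finset.notMem_erase _ _)
            · rw [hN'def, Function.update_of_ne h] at hxN
              exact ⟨h, hxS, hxN⟩
          · rintro ⟨h, hxS, hxN⟩
            refine ⟨hxS, ?_⟩
            rw [hN'def, Function.update_of_ne h]
            exact hxN
        have hx0f : x0 ∈ S.filter (fun x => ys ∈ N x) :=
          Finset.mem_filter.mpr ⟨hx0S, hysN⟩
        have hcardf : (S.filter (fun x => ys ∈ N' x)).card + 1
            = (S.filter (fun x => ys ∈ N x)).card := by
          rw [hfe, Finset.card_erase_of_mem hx0f]
          have := Finset.card_pos.mpr ⟨x0, hx0f⟩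
          omega
        have hcc := hcond S hS
        rw [hsplit2] at hcc
        rw [hsplit1, hrest, hc'ys]
        omega
      · have hd'S : ∑ x ∈ S, d' x = ∑ x ∈ S, d x := by
          refine Finset.sum_congr rfl (fun x hx => ?_)
          have hxne : x ≠ x0 := by rintro rfl; exact hx0S hx
          rw [hd'def, Function.update_of_ne hxne]
        have hfe : S.filter (fun x => ys ∈ N' x) = S.filter (fun x => ys ∈ N x) := by
          apply Finset.filter_congr
          intro x hx
          have hxne : x ≠ x0 := by rintro rfl; exact hx0S hx
          rw [hN'def, Function.update_of_ne hxne]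
        rcases Nat.eq_zero_or_pos (∑ x ∈ S, d x) with hz | hz
        · rw [hd'S, hz]; exact Nat.zero_le _
        · have hSn : ∑ x ∈ S, d x < n := by
            have hd2 : Disjoint S ({x0} : Finset V) := by
              rw [Finset.disjoint_singleton_right]; exact hx0S
            have h1 : ∑ x ∈ S, d x + d x0 ≤ ∑ x ∈ X, d x := by
              calc ∑ x ∈ S, d x + d x0 = ∑ x ∈ S ∪ {x0}, d x := by
                    rw [Finset.sum_union hd2, Finset.sum_singleton]
                _ ≤ ∑ x ∈ X, d x := Finset.sum_le_sum_of_subset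
                    (Finset.union_subset hS (Finset.singleton_subset_iff.mpr hx0X))
            omega
          have hst := hstrict S hS hz hSn
          rw [hsplit2] at hst
          rw [hsplit1, hrest, hc'ys, hfe, hd'S]
          omega
    obtain ⟨B', hB'N, hB'card, hB'use⟩ := IH (n - 1) (by omega) X N' d' c' hN'sub hsum' hcond'
    have hysnB' : ys ∉ B' x0 := by
      intro h
      have := hB'N x0 hx0X h
      rw [hN'def, Function.update_self] at this
      exact Finset.notMem_erase _ _ this
    refine ⟨fun x => if x = x0 then insert ys (B' x0) else B' x,
      fun x hx => ?_, fun x hx => ?_, fun y hy => ?_⟩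
    · show (if x = x0 then insert ys (B' x0) else B' x) ⊆ N x
      by_cases h : x = x0
      · rw [if_pos h, h]
        refine Finset.insert_subset hysN ?_
        refine (hB'N x0 hx0X).trans ?_
        rw [hN'def, Function.update_self]
        exact Finset.erase_subset _ _
      · rw [if_neg h]
        refine (hB'N x hx).trans ?_
        rw [hN'def, Function.update_of_ne h]
    · show (if x = x0 then insert ys (B' x0) else B' x).card = d x
      by_cases h : x = x0
      · rw [if_pos h, h]
        rw [Finset.card_insert_of_notMem hysnB', hB'card x0 hx0X]
        rw [hd'def, Function.update_self]
        omega
      · rw [if_neg h]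
        rw [hB'card x hx, hd'def, Function.update_of_ne h]
    · show (X.filter (fun x => y ∈ (if x = x0 then insert ys (B' x0) else B' x))).card ≤ c y
      by_cases h : y = ys
      · subst h
        have hfil : X.filter (fun x => y ∈ (if x = x0 then insert y (B' x0) else B' x)) ⊆
            insert x0 (X.filter (fun x => y ∈ B' x)) := by
          intro x hx
          rw [Finset.mem_filter] at hx
          by_cases hxx : x = x0
          · subst hxx; exact Finset.mem_insert_self _ _
          · refine Finset.mem_insert_of_mem (Finset.mem_filter.mpr ⟨hx.1, ?_⟩)
            simpa [hxx] using hx.2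
        have h1 := Finset.card_le_card hfil
        have h2 := Finset.card_insert_le x0 (X.filter (fun x => y ∈ B' x))
        have h3 := hB'use y hy
        rw [hc'def, Function.update_self] at h3
        omega
      · have hfil : X.filter (fun x => y ∈ (if x = x0 then insert ys (B' x0) else B' x))
            = X.filter (fun x => y ∈ B' x) := by
          apply Finset.filter_congr
          intro x hx
          by_cases hxx : x = x0
          · subst hxx
            simp only [if_true, Finset.mem_insert]
            constructor
            · rintro (h1 | h1)
              · exact absurd h1 h
              · exact h1
            · exact Or.inr
          · simp [hxx]
        rw [hfil]
        have h3 := hB'use y hy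
        rw [hc'def, Function.update_of_ne h] at h3
        exact h3

/-- Crux: a matching saturating `X` and covering all fully-used vertices of `Y`. -/
lemma crux (X Y : Finset V) (j : ℕ) (hj : 1 ≤ j) (B : V → Finset V)
    (hBY : ∀ x ∈ X, B x ⊆ Y) (hcard : ∀ x ∈ X, (B x).card = j)
    (husage : ∀ y, (X.filter (fun x => y ∈ B x)).card ≤ j) :
    ∃ f : V → V, (∀ x ∈ X, f x ∈ B x) ∧ Set.InjOn f ↑X ∧
      ∀ y, (X.filter (fun x => y ∈ B x)).card = j → ∃ x ∈ X, f x = y := by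
  have hcount : ∀ A ⊆ X, ∑ y ∈ Y, (A.filter (fun x => y ∈ B x)).card = A.card * j := by
    intro A hA
    rw [double_count A Y B (fun x hx => hBY x (hA hx))]
    rw [Finset.sum_congr rfl (fun x hx => hcard x (hA hx)), Finset.sum_const, smul_eq_mul]
  have hXY : X.card ≤ Y.card := by
    have h1 := hcount X (le_refl X)
    have h2 : ∑ y ∈ Y, (X.filter (fun x => y ∈ B x)).card ≤ ∑ y ∈ Y, j :=
      Finset.sum_le_sum (fun y _ => husage y)
    rw [h1, Finset.sum_const, smul_eq_mul] at h2
    exact Nat.le_of_mul_le_mul_right h2 hj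
  set m := Y.card - X.card with hm
  set F : Finset V := Y.filter (fun y => (X.filter (fun x => y ∈ B x)).card < j) with hF
  set t : ({x // x ∈ X} ⊕ Fin m) → Finset V :=
    fun i => Sum.elim (fun x : {x // x ∈ X} => B x.val) (fun _ => F) i with ht
  have hhall : ∀ s : Finset ({x // x ∈ X} ⊕ Fin m), s.card ≤ (s.biUnion t).card := by
    intro s
    set sl : Finset {x // x ∈ X} := X.attach.filter (fun x => Sum.inl x ∈ s) with hsl
    set A : Finset V := sl.image Subtype.val with hA
    have hAX : A ⊆ X := by
      intro a ha
      obtain ⟨x, _, rfl⟩ := Finset.mem_image.mp ha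
      exact x.2
    have hAcard : A.card = sl.card := Finset.card_image_of_injective _ Subtype.val_injective
    have hsleft : s.filter (fun i => i.isLeft) ⊆ sl.image Sum.inl := by
      intro i hi
      rw [Finset.mem_filter] at hi
      match i with
      | Sum.inl x =>
        exact Finset.mem_image.mpr ⟨x, Finset.mem_filter.mpr ⟨Finset.mem_attach _ _, hi.1⟩, rfl⟩
      | Sum.inr c => simp at hi
    have hslcard : (s.filter (fun i => i.isLeft)).card ≤ sl.card :=
      (Finset.card_le_card hsleft).trans Finset.card_image_le
    have hsrcard : (s.filter (fun i => ¬ i.isLeft)).card ≤ m := by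
      have hsub : s.filter (fun i => ¬ i.isLeft) ⊆
          (Finset.univ : Finset (Fin m)).image Sum.inr := by
        intro i hi
        rw [Finset.mem_filter] at hi
        match i with
        | Sum.inl x => simp at hi
        | Sum.inr c => exact Finset.mem_image.mpr ⟨c, Finset.mem_univ _, rfl⟩
      calc (s.filter (fun i => ¬ i.isLeft)).card
          ≤ ((Finset.univ : Finset (Fin m)).image Sum.inr).card := Finset.card_le_card hsub
        _ ≤ (Finset.univ : Finset (Fin m)).card := Finset.card_image_le
        _ = m := by rw [Finset.card_univ, Fintype.card_fin]
    have hscard : s.card ≤ sl.card + m := by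
      have := Finset.card_filter_add_card_filter_not (s := s) (p := fun i => i.isLeft)
      omega
    set W : Finset V := A.biUnion B with hW
    have hWY : W ⊆ Y := by
      intro y hy
      obtain ⟨a, haA, hyB⟩ := Finset.mem_biUnion.mp hy
      exact hBY a (hAX haA) hyB
    have hWsub : W ⊆ s.biUnion t := by
      intro y hy
      obtain ⟨a, haA, hyB⟩ := Finset.mem_biUnion.mp hy
      obtain ⟨x, hxsl, rfl⟩ := Finset.mem_image.mp haA
      exact Finset.mem_biUnion.mpr ⟨Sum.inl x, (Finset.mem_filter.mp hxsl).2, hyB⟩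
    by_cases hR : ∃ i ∈ s, ¬ i.isLeft
    · -- some dummy present
      obtain ⟨i0, hi0s, hi0r⟩ := hR
      have hFsub : F ⊆ s.biUnion t := by
        match i0 with
        | Sum.inl x => simp at hi0r
        | Sum.inr c =>
          intro y hy
          exact Finset.mem_biUnion.mpr ⟨Sum.inr c, hi0s, hy⟩
      have hWFsub : W ∪ F ⊆ s.biUnion t := Finset.union_subset hWsub hFsub
      have hWFY : W ∪ F ⊆ Y := Finset.union_subset hWY (Finset.filter_subset _ _)
      have hkey : ∀ y ∈ Y \ (W ∪ F), ((X \ A).filter (fun x => y ∈ B x)).card = j := by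
        intro y hy
        rw [Finset.mem_sdiff, Finset.mem_union] at hy
        push_neg at hy
        obtain ⟨hyY, hyW, hyF⟩ := hy
        have husagej : (X.filter (fun x => y ∈ B x)).card = j := by
          have : ¬ ((X.filter (fun x => y ∈ B x)).card < j) := by
            intro hlt
            exact hyF (Finset.mem_filter.mpr ⟨hyY, hlt⟩)
          have := husage y
          omega
        have hfil : (X \ A).filter (fun x => y ∈ B x) = X.filter (fun x => y ∈ B x) := by
          ext x
          rw [Finset.mem_filter, Finset.mem_filter, Finset.mem_sdiff]
          constructor
          · rintro ⟨⟨h1, _⟩, h3⟩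
            exact ⟨h1, h3⟩
          · rintro ⟨h1, h3⟩
            refine ⟨⟨h1, fun hxA => ?_⟩, h3⟩
            exact hyW (Finset.mem_biUnion.mpr ⟨x, hxA, h3⟩)
        rw [hfil, husagej]
      have hsum1 : (Y \ (W ∪ F)).card * j ≤ (X.card - A.card) * j := by
        have e1 : ∑ y ∈ Y \ (W ∪ F), ((X \ A).filter (fun x => y ∈ B x)).card
            ≤ ∑ y ∈ Y, ((X \ A).filter (fun x => y ∈ B x)).card :=
          Finset.sum_le_sum_of_subset (Finset.sdiff_subset)
        have e2 := hcount (X \ A) (Finset.sdiff_subset)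
        have e3 : ∑ y ∈ Y \ (W ∪ F), ((X \ A).filter (fun x => y ∈ B x)).card
            = (Y \ (W ∪ F)).card * j := by
          rw [Finset.sum_congr rfl hkey, Finset.sum_const, smul_eq_mul]
        rw [Finset.card_sdiff_of_subset hAX] at e2
        rw [e3] at e1
        rw [e2] at e1
        exact e1
      have hYWF : (Y \ (W ∪ F)).card = Y.card - (W ∪ F).card := Finset.card_sdiff_of_subset hWFY
      have hAleX : A.card ≤ X.card := Finset.card_le_card hAX
      have hWFle : (W ∪ F).card ≤ Y.card := Finset.card_le_card hWFY
      have hj' : 0 < j := hj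
      have h5 : Y.card - (W ∪ F).card ≤ X.card - A.card :=
        Nat.le_of_mul_le_mul_right (by rw [← hYWF]; exact hsum1) hj'
      have h6 := Finset.card_le_card hWFsub
      omega
    · -- all elements are left
      push_neg at hR
      have hs_eq : s.filter (fun i => i.isLeft) = s :=
        Finset.filter_true_of_mem (fun i hi => hR i hi)
      have hsA : s.card ≤ A.card := by
        rw [← hs_eq, hAcard]
        exact hslcard
      have hAW : A.card ≤ W.card := by
        have e2 := hcount A hAX
        have e4 : ∑ y ∈ Y, (A.filter (fun x => y ∈ B x)).card ≤
            ∑ y ∈ Y, (if y ∈ W then j else 0) := by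
          refine Finset.sum_le_sum (fun y hy => ?_)
          by_cases hyW : y ∈ W
          · rw [if_pos hyW]
            calc (A.filter (fun x => y ∈ B x)).card
                ≤ (X.filter (fun x => y ∈ B x)).card :=
                  Finset.card_le_card (Finset.filter_subset_filter _ hAX)
              _ ≤ j := husage y
          · rw [if_neg hyW, Nat.le_zero, Finset.card_eq_zero, Finset.filter_eq_empty_iff]
            intro x hxA hyB
            exact hyW (Finset.mem_biUnion.mpr ⟨x, hxA, hyB⟩)
        have e5 : ∑ y ∈ Y, (if y ∈ W then j else 0) = (Y.filter (fun y => y ∈ W)).card * j := by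
          rw [← Finset.sum_filter, Finset.sum_const, smul_eq_mul]
        have e6 : (Y.filter (fun y => y ∈ W)).card ≤ W.card :=
          Finset.card_le_card (fun y hy => (Finset.mem_filter.mp hy).2)
        have e7 : A.card * j ≤ W.card * j := by
          rw [← e2]
          calc ∑ y ∈ Y, (A.filter (fun x => y ∈ B x)).card
              ≤ ∑ y ∈ Y, (if y ∈ W then j else 0) := e4
            _ = (Y.filter (fun y => y ∈ W)).card * j := e5
            _ ≤ W.card * j := Nat.mul_le_mul_right _ e6
        exact Nat.le_of_mul_le_mul_right e7 hj
      have := Finset.card_le_card hWsub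
      omega
  obtain ⟨f₀, hinj, hmem⟩ := (Finset.all_card_le_biUnion_card_iff_exists_injective t).mp hhall
  have himg : Finset.univ.image f₀ = Y := by
    apply Finset.eq_of_subset_of_card_le
    · intro y hy
      obtain ⟨i, _, rfl⟩ := Finset.mem_image.mp hy
      match i with
      | Sum.inl x => exact hBY x.val x.2 (hmem (Sum.inl x))
      | Sum.inr c => exact Finset.filter_subset _ _ (hmem (Sum.inr c))
    · rw [Finset.card_image_of_injective _ hinj, Finset.card_univ, Fintype.card_sum,
        Fintype.card_coe, Fintype.card_fin]
      omega
  refine ⟨fun v => if h : v ∈ X then f₀ (Sum.inl ⟨v, h⟩) else v, fun x hx => ?_, ?_, ?_⟩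
  · simp only [dif_pos hx]
    exact hmem (Sum.inl ⟨x, hx⟩)
  · intro a ha b hb hab
    rw [Finset.mem_coe] at ha hb
    simp only [dif_pos ha, dif_pos hb] at hab
    have := hinj hab
    rw [Sum.inl.injEq, Subtype.mk.injEq] at this
    exact this
  · intro y hy
    have hyY : y ∈ Y := by
      have hpos : 0 < (X.filter (fun x => y ∈ B x)).card := by omega
      obtain ⟨x, hx⟩ := Finset.card_pos.mp hpos
      rw [Finset.mem_filter] at hx
      exact hBY x hx.1 hx.2
    have : y ∈ Finset.univ.image f₀ := himg ▸ hyY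
    obtain ⟨i, _, hiy⟩ := Finset.mem_image.mp this
    match i with
    | Sum.inl x =>
      refine ⟨x.val, x.2, ?_⟩
      simp only [dif_pos x.2]
      rw [← hiy]
    | Sum.inr c =>
      exfalso
      have h2 : y ∈ F := by rw [← hiy]; exact hmem (Sum.inr c)
      simp only [hF, Finset.mem_filter] at h2
      omega

/-- Peeling: decompose a degree-constrained subgraph into `j` rainbow matchings. -/
lemma peel (X Y : Finset V) : ∀ (j : ℕ) (B : V → Finset V),
    (∀ x ∈ X, B x ⊆ Y) → (∀ x ∈ X, (B x).card = j) →
    (∀ y, (X.filter (fun x => y ∈ B x)).card ≤ j) →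
    ∃ F : Fin j → V → V, (∀ i, ∀ x ∈ X, F i x ∈ B x) ∧ (∀ i, Set.InjOn (F i) ↑X) ∧
      (∀ x ∈ X, ∀ i i' : Fin j, i ≠ i' → F i x ≠ F i' x) := by
  intro j
  induction j with
  | zero =>
    intro B _ _ _
    exact ⟨fun i => i.elim0, fun i => i.elim0, fun i => i.elim0, fun x _ i => i.elim0⟩
  | succ j IH =>
    intro B hBY hBcard husage
    obtain ⟨f, hf1, hf2, hf3⟩ := crux X Y (j + 1) (Nat.succ_le_succ (Nat.zero_le _)) B hBY
      hBcard husage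
    set B' : V → Finset V := fun x => (B x).erase (f x) with hB'
    have hB'Y : ∀ x ∈ X, B' x ⊆ Y := fun x hx => (Finset.erase_subset _ _).trans (hBY x hx)
    have hB'card : ∀ x ∈ X, (B' x).card = j := by
      intro x hx
      rw [hB']
      show ((B x).erase (f x)).card = j
      rw [Finset.card_erase_of_mem (hf1 x hx), hBcard x hx]
      omega
    have husage' : ∀ y, (X.filter (fun x => y ∈ B' x)).card ≤ j := by
      intro y
      have hsubB : ∀ x, y ∈ B' x → y ∈ B x := fun x h => Finset.mem_of_mem_erase h
      by_cases hfull : (X.filter (fun x => y ∈ B x)).card = j + 1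
      · obtain ⟨x1, hx1X, hx1⟩ := hf3 y hfull
        have hsub : X.filter (fun x => y ∈ B' x) ⊆ (X.filter (fun x => y ∈ B x)).erase x1 := by
          intro x hx
          rw [Finset.mem_filter] at hx
          refine Finset.mem_erase.mpr ⟨?_, Finset.mem_filter.mpr ⟨hx.1, hsubB x hx.2⟩⟩
          rintro rfl
          exact (Finset.mem_erase.mp hx.2).1 hx1.symm
        have h1 := Finset.card_le_card hsub
        have h2 : ((X.filter (fun x => y ∈ B x)).erase x1).card
            = (X.filter (fun x => y ∈ B x)).card - 1 :=
          Finset.card_erase_of_mem (Finset.mem_filter.mpr ⟨hx1X, hx1 ▸ hf1 x1 hx1X⟩)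
        omega
      · have h1 : (X.filter (fun x => y ∈ B' x)).card ≤ (X.filter (fun x => y ∈ B x)).card :=
          Finset.card_le_card (fun x hx => Finset.mem_filter.mpr
            ⟨(Finset.mem_filter.mp hx).1, hsubB x (Finset.mem_filter.mp hx).2⟩)
        have h2 := husage y
        omega
    obtain ⟨F', h1, h2, h3⟩ := IH B' hB'Y hB'card husage'
    refine ⟨Fin.cases f F', ?_, ?_, ?_⟩
    · intro i x hx
      induction i using Fin.cases with
      | zero => simp only [Fin.cases_zero]; exact hf1 x hx
      | succ i' =>
        simp only [Fin.cases_succ]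
        exact Finset.mem_of_mem_erase (h1 i' x hx)
    · intro i
      induction i using Fin.cases with
      | zero => simp only [Fin.cases_zero]; exact hf2
      | succ i' => simp only [Fin.cases_succ]; exact h2 i'
    · intro x hx i i' hne
      induction i using Fin.cases with
      | zero =>
        induction i' using Fin.cases with
        | zero => exact absurd rfl hne
        | succ b =>
          simp only [Fin.cases_zero, Fin.cases_succ]
          intro heq
          have hmem := h1 b x hx
          rw [← heq] at hmem
          exact (Finset.mem_erase.mp hmem).1 rfl
      | succ a =>
        induction i' using Fin.cases with
        | zero =>
          simp only [Fin.cases_zero, Fin.cases_succ]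
          intro heq
          have hmem := h1 a x hx
          rw [heq] at hmem
          exact (Finset.mem_erase.mp hmem).1 rfl
        | succ b =>
          simp only [Fin.cases_succ]
          refine h3 x hx a b (fun h => hne ?_)
          rw [h]

theorem stmt_16 [Fintype V] (k : ℕ) (hk : 1 ≤ k) (G : SimpleGraph V)
    (X : Finset V) (hbip : ∀ u v : V, G.Adj u v → (u ∈ X ↔ v ∉ X))
    (hβ : 1 ≤ bipBindingNum G k X) :
    ∃ M : Fin k → G.Subgraph,
      (∀ i, (M i).IsMatching ∧ (↑X : Set V) ⊆ (M i).verts) ∧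
      ∀ i j, i ≠ j → Disjoint (M i).edgeSet (M j).edgeSet := by
  have h0 : (X.powerset.filter fun S : Finset V => k ≤ S.card).Nonempty := by
    by_contra h
    rw [bipBindingNum, dif_neg h] at hβ
    linarith
  have hβ' : (1 : ℝ) ≤ (X.powerset.filter fun S : Finset V => k ≤ S.card).inf' h0
      (fun S => ((kNbhd G k S).card : ℝ) / (S.card : ℝ)) := by
    rw [bipBindingNum, dif_pos h0] at hβ
    exact hβ
  have hS : ∀ S, S ⊆ X → k ≤ S.card → S.card ≤ (kNbhd G k S).card := by
    intro S hSX hkS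
    have hmem : S ∈ X.powerset.filter (fun S : Finset V => k ≤ S.card) :=
      Finset.mem_filter.mpr ⟨Finset.mem_powerset.mpr hSX, hkS⟩
    have hle := Finset.inf'_le (b := S)
      (f := fun S => ((kNbhd G k S).card : ℝ) / (S.card : ℝ)) hmem
    have h1 : (1 : ℝ) ≤ ((kNbhd G k S).card : ℝ) / (S.card : ℝ) := le_trans hβ' hle
    have hSpos : (0 : ℝ) < (S.card : ℝ) := by
      have : 0 < S.card := lt_of_lt_of_le hk hkS
      exact_mod_cast this
    rw [le_div_iff₀ hSpos, one_mul] at h1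
    exact_mod_cast h1
  have hXk : k ≤ X.card := by
    obtain ⟨S₀, hS₀⟩ := h0
    rw [Finset.mem_filter, Finset.mem_powerset] at hS₀
    exact le_trans hS₀.2 (Finset.card_le_card hS₀.1)
  have hnbX : ∀ S, S ⊆ X → ∀ y ∈ kNbhd G k S, y ∉ X := by
    intro S hSX y hy
    rw [kNbhd, Finset.mem_filter] at hy
    have hpos : 0 < (S.filter (fun u => G.Adj y u)).card := lt_of_lt_of_le hk hy.2
    obtain ⟨u, hu⟩ := Finset.card_pos.mp hpos
    rw [Finset.mem_filter] at hu
    intro hyX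
    exact (hbip y u hu.2).mp hyX (hSX hu.1)
  set N : V → Finset V := fun x => Xᶜ.filter (fun y => G.Adj x y) with hN
  have hNY : ∀ x ∈ X, N x ⊆ Xᶜ := fun x _ => Finset.filter_subset _ _
  have hfilter_eq : ∀ S, S ⊆ X → ∀ y ∈ Xᶜ,
      (S.filter (fun x => y ∈ N x)).card = (S.filter (fun u => G.Adj y u)).card := by
    intro S hSX y hyc
    congr 1
    apply Finset.filter_congr
    intro x hx
    rw [hN]
    simp only [Finset.mem_filter, hyc, true_and]
    rw [G.adj_comm]
  have hcond : ∀ S ⊆ X, ∑ x ∈ S, k ≤ ∑ y ∈ Xᶜ, min k ((S.filter (fun x => y ∈ N x)).card) := by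
    intro S hSX
    rcases le_or_gt k S.card with hge | hlt
    · have hΛc : kNbhd G k S ⊆ Xᶜ := fun y hy => Finset.mem_compl.mpr (hnbX S hSX y hy)
      have hterm : ∀ y ∈ kNbhd G k S, min k ((S.filter (fun x => y ∈ N x)).card) = k := by
        intro y hy
        rw [hfilter_eq S hSX y (hΛc hy)]
        rw [kNbhd, Finset.mem_filter] at hy
        exact min_eq_left hy.2
      calc ∑ x ∈ S, k = S.card * k := by rw [Finset.sum_const, smul_eq_mul]
        _ ≤ (kNbhd G k S).card * k := Nat.mul_le_mul_right _ (hS S hSX hge)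
        _ = ∑ y ∈ kNbhd G k S, min k ((S.filter (fun x => y ∈ N x)).card) := by
            rw [Finset.sum_congr rfl hterm, Finset.sum_const, smul_eq_mul]
        _ ≤ ∑ y ∈ Xᶜ, min k ((S.filter (fun x => y ∈ N x)).card) :=
            Finset.sum_le_sum_of_subset hΛc
    · obtain ⟨S', hSS', hS'X, hS'card⟩ :=
        Finset.exists_subsuperset_card_eq hSX (le_of_lt hlt) hXk
      have hΛc : kNbhd G k S' ⊆ Xᶜ := fun y hy => Finset.mem_compl.mpr (hnbX S' hS'X y hy)
      have hΛcard : k ≤ (kNbhd G k S').card := by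
        have := hS S' hS'X (le_of_eq hS'card.symm)
        omega
      have hterm : ∀ y ∈ kNbhd G k S', min k ((S.filter (fun x => y ∈ N x)).card) = S.card := by
        intro y hy
        have hy2 : k ≤ (S'.filter (fun u => G.Adj y u)).card := by
          rw [kNbhd, Finset.mem_filter] at hy
          exact hy.2
        have hfull : S'.filter (fun u => G.Adj y u) = S' :=
          Finset.eq_of_subset_of_card_le (Finset.filter_subset _ _) (by omega)
        have hadj : ∀ x ∈ S, G.Adj y x := by
          intro x hx
          have hxS' : x ∈ S'.filter (fun u => G.Adj y u) := by
            rw [hfull]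
            exact hSS' hx
          exact (Finset.mem_filter.mp hxS').2
        have hSfull : S.filter (fun u => G.Adj y u) = S := Finset.filter_true_of_mem hadj
        rw [hfilter_eq S hSX y (hΛc hy), hSfull]
        exact min_eq_right (le_of_lt hlt)
      calc ∑ x ∈ S, k = k * S.card := by rw [Finset.sum_const, smul_eq_mul, mul_comm]
        _ ≤ (kNbhd G k S').card * S.card := Nat.mul_le_mul_right _ hΛcard
        _ = ∑ y ∈ kNbhd G k S', min k ((S.filter (fun x => y ∈ N x)).card) := by
            rw [Finset.sum_congr rfl hterm, Finset.sum_const, smul_eq_mul]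
        _ ≤ ∑ y ∈ Xᶜ, min k ((S.filter (fun x => y ∈ N x)).card) :=
            Finset.sum_le_sum_of_subset hΛc
  obtain ⟨B, hB1, hB2, hB3⟩ := bmatch Xᶜ (∑ x ∈ X, k) X N (fun _ => k) (fun _ => k) hNY rfl hcond
  have hBXc : ∀ x ∈ X, B x ⊆ Xᶜ := fun x hx => (hB1 x hx).trans (hNY x hx)
  have husage : ∀ y, (X.filter (fun x => y ∈ B x)).card ≤ k := by
    intro y
    by_cases hy : y ∈ Xᶜ
    · exact hB3 y hy
    · have hemp : X.filter (fun x => y ∈ B x) = ∅ := by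
        rw [Finset.filter_eq_empty_iff]
        intro x hx hyB
        exact hy (hBXc x hx hyB)
      rw [hemp]
      simp
  obtain ⟨F, hF1, hF2, hF3⟩ := peel X Xᶜ k B hBXc hB2 husage
  have hadjF : ∀ i, ∀ x ∈ X, G.Adj x (F i x) := by
    intro i x hx
    have hmem := hB1 x hx (hF1 i x hx)
    rw [hN] at hmem
    exact (Finset.mem_filter.mp hmem).2
  have hFout : ∀ i, ∀ x ∈ X, F i x ∉ X := fun i x hx =>
    Finset.mem_compl.mp (hBXc x hx (hF1 i x hx))
  refine ⟨fun i =>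
    { verts := ↑X ∪ (F i) '' ↑X
      Adj := fun a b => (a ∈ X ∧ b = F i a) ∨ (b ∈ X ∧ a = F i b)
      adj_sub := by
        rintro a b (⟨ha, rfl⟩ | ⟨hb, rfl⟩)
        · exact hadjF i a ha
        · exact (hadjF i b hb).symm
      edge_vert := by
        rintro a b (⟨ha, rfl⟩ | ⟨hb, rfl⟩)
        · exact Or.inl ha
        · exact Or.inr ⟨b, hb, rfl⟩
      symm := by
        constructor
        rintro a b (⟨ha, h⟩ | ⟨hb, h⟩)
        · exact Or.inr ⟨ha, h⟩
        · exact Or.inl ⟨hb, h⟩ }, fun i => ⟨?_, ?_⟩, ?_⟩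
  · -- IsMatching
    intro v hv
    rcases hv with hvX | ⟨x, hxX, rfl⟩
    · have hvX' : v ∈ X := hvX
      refine ⟨F i v, Or.inl ⟨hvX', rfl⟩, ?_⟩
      rintro w (⟨_, rfl⟩ | ⟨hwX, hvw⟩)
      · rfl
      · exfalso
        rw [hvw] at hvX'
        exact hFout i w hwX hvX'
    · have hxX' : x ∈ X := hxX
      have hvnX : F i x ∉ X := hFout i x hxX'
      refine ⟨x, Or.inr ⟨hxX', rfl⟩, ?_⟩
      rintro w (⟨hvX, _⟩ | ⟨hwX, hvw⟩)
      · exact absurd hvX hvnX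
      · exact hF2 i hwX (Finset.mem_coe.mpr hxX') hvw.symm
  · exact Set.subset_union_left
  · intro i i' hne
    rw [Set.disjoint_left]
    intro e hei hej
    revert hei hej
    refine Sym2.ind (fun a b => ?_) e
    intro hei hej
    rw [SimpleGraph.Subgraph.mem_edgeSet] at hei hej
    have hei' : (a ∈ X ∧ b = F i a) ∨ (b ∈ X ∧ a = F i b) := hei
    have hej' : (a ∈ X ∧ b = F i' a) ∨ (b ∈ X ∧ a = F i' b) := hej
    rcases hei' with ⟨ha, hb⟩ | ⟨hb, ha⟩
    · rcases hej' with ⟨ha2, hb2⟩ | ⟨hb2, ha2⟩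
      · exact hF3 a ha i i' hne (by rw [← hb, ← hb2])
      · rw [hb] at hb2
        exact hFout i a ha hb2
    · rcases hej' with ⟨ha2, hb2⟩ | ⟨hb2, ha2⟩
      · rw [ha] at ha2
        exact hFout i b hb ha2
      · exact hF3 b hb i i' hne (by rw [← ha, ← ha2])
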